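/- Let (V,𝓑) be a Steiner 2-design S(2,μ,v) with odd replication number r = (v−1)/(μ−1), and suppose (V,𝓑) contains j point-wise mutually disjoint subdesigns (V₁,𝓑₁),…,(Vⱼ,𝓑ⱼ) with V₁ ∪ ⋯ ∪ Vⱼ ⊆ V, each having even replication number (|Vᵢ|−1)/(μ−1). Let H' be the point-by-block incidence matrix over 𝔽₂ of (V, 𝓑 \ (𝓑₁ ∪ ⋯ ∪ 𝓑ⱼ)). Then the rank of H'·H'ᵀ over 𝔽₂ equals (|V₁|−1) + (|V₂|−1) + ⋯ + (|Vⱼ|−1) + 1. -/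

import Mathlib

open scoped Classical

open Finset in
lemma rep_count {V : Type} [DecidableEq V] (μ : ℕ)
    (W : Finset V) (C : Finset (Finset V))
    (hc : ∀ B ∈ C, B.card = μ)
    (hsub : ∀ B ∈ C, B ⊆ W)
    (hp2 : ∀ p ∈ W, ∀ q ∈ W, p ≠ q → ∃! B, B ∈ C ∧ p ∈ B ∧ q ∈ B)
    (p : V) (hp : p ∈ W) :
    (C.filter (fun B => p ∈ B)).card * (μ - 1) = W.card - 1 := by
  classical
  have key : ((C.filter (fun B => p ∈ B)).biUnion (fun B => B.erase p)) = W.erase p := by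
    ext q
    simp only [mem_biUnion, mem_filter, mem_erase]
    constructor
    · rintro ⟨B, ⟨hB, hpB⟩, hqp, hqB⟩
      exact ⟨hqp, hsub B hB hqB⟩
    · rintro ⟨hqp, hqW⟩
      obtain ⟨B, ⟨hB, hpB, hqB⟩, -⟩ := hp2 p hp q hqW (Ne.symm hqp)
      exact ⟨B, ⟨hB, hpB⟩, hqp, hqB⟩
  have hdis : ∀ B₁ ∈ C.filter (fun B => p ∈ B), ∀ B₂ ∈ C.filter (fun B => p ∈ B),
      B₁ ≠ B₂ → Disjoint (B₁.erase p) (B₂.erase p) := by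
    intro B₁ h₁ B₂ h₂ hne
    simp only [mem_filter] at h₁ h₂
    rw [Finset.disjoint_left]
    intro q hq₁ hq₂
    rw [mem_erase] at hq₁ hq₂
    obtain ⟨B₀, -, huniq⟩ := hp2 p hp q (hsub _ h₁.1 hq₁.2) (Ne.symm hq₁.1)
    exact hne ((huniq B₁ ⟨h₁.1, h₁.2, hq₁.2⟩).trans (huniq B₂ ⟨h₂.1, h₂.2, hq₂.2⟩).symm)
  have h1 := Finset.card_biUnion hdis
  rw [key, Finset.card_erase_of_mem hp] at h1
  have h2 : ∑ B ∈ C.filter (fun B => p ∈ B), (B.erase p).card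
      = (C.filter (fun B => p ∈ B)).card * (μ - 1) := by
    rw [Finset.sum_congr rfl (fun B hB => ?_), Finset.sum_const, smul_eq_mul]
    rw [mem_filter] at hB
    rw [Finset.card_erase_of_mem hB.2, hc B hB.1]
  omega


lemma oddCast (c : ℕ) (h : Odd c) : ((c : ZMod 2) : ZMod 2) = 1 := by
  rw [← ZMod.natCast_mod, Nat.odd_iff.mp h]
  rfl

/-- Deleting `j` point-wise mutually disjoint subdesigns, each with even
replication number, from a Steiner 2-design `S(2, μ, v)` with odd replication number
yields an incidence matrix `H'` with `rank(H' * H'ᵀ) = (|V₁|-1) + ⋯ + (|Vⱼ|-1) + 1`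
over `𝔽₂`. -/
theorem stmt_4 (μ v r j : ℕ) (hμ : 2 ≤ μ)
    (V : Type) [Fintype V] [DecidableEq V] (hv : Fintype.card V = v)
    (𝓑 : Finset (Finset V))
    (hblocks : ∀ B ∈ 𝓑, B.card = μ)
    (hpairs : ∀ p q : V, p ≠ q → ∃! B, B ∈ 𝓑 ∧ p ∈ B ∧ q ∈ B)
    (hr : r * (μ - 1) = v - 1) (hrodd : Odd r)
    (Vs : Fin j → Finset V) (Bs : Fin j → Finset (Finset V))
    (hVs : ∀ i, Vs i ⊂ Finset.univ)
    (hBs : ∀ i, Bs i ⊂ 𝓑)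
    (hsubblocks : ∀ i, ∀ B ∈ Bs i, B ⊆ Vs i)
    (hsubpairs : ∀ i, ∀ p ∈ Vs i, ∀ q ∈ Vs i, p ≠ q → ∃! B, B ∈ Bs i ∧ p ∈ B ∧ q ∈ B)
    (hdisj : ∀ i i', i ≠ i' → Disjoint (Vs i) (Vs i'))
    (hunion : Finset.univ.biUnion Vs ⊆ Finset.univ)
    (rs : Fin j → ℕ) (hrs : ∀ i, rs i * (μ - 1) = (Vs i).card - 1)
    (hrseven : ∀ i, Even (rs i))
    (H' : Matrix V {B // B ∈ 𝓑 \ Finset.univ.biUnion Bs} (ZMod 2))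
    (hH' : ∀ p B, H' p B = if p ∈ B.1 then 1 else 0) :
    (H' * H'.transpose).rank = (∑ i : Fin j, ((Vs i).card - 1)) + 1 := by
  -- basic facts
  have hμ1 : 1 ≤ μ - 1 := by omega
  have hr1 : 1 ≤ r := hrodd.pos
  have hv2 : 2 ≤ v := by
    have : 1 * 1 ≤ r * (μ - 1) := Nat.mul_le_mul hr1 hμ1
    omega
  have hVne : Nonempty V := by
    rw [← Fintype.card_pos_iff, hv]; omega
  have hBsub : ∀ i, Bs i ⊆ 𝓑 := fun i => (hBs i).subset
  have hUuniq : ∀ (p : V) i i', p ∈ Vs i → p ∈ Vs i' → i = i' := by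
    intro p i i' h h'
    by_contra hne
    exact absurd h' (Finset.disjoint_left.mp (hdisj i i' hne) h)
  -- replication numbers
  have hrV : ∀ p : V, (𝓑.filter (fun B => p ∈ B)).card = r := by
    intro p
    have := rep_count μ Finset.univ 𝓑 hblocks (fun B _ => Finset.subset_univ B)
      (fun p _ q _ h => hpairs p q h) p (Finset.mem_univ p)
    rw [Finset.card_univ, hv, ← hr] at this
    exact Nat.eq_of_mul_eq_mul_right (by omega) this
  have hrVs : ∀ i, ∀ p ∈ Vs i, ((Bs i).filter (fun B => p ∈ B)).card = rs i := by
    intro i p hp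
    have := rep_count μ (Vs i) (Bs i) (fun B hB => hblocks B (hBsub i hB))
      (hsubblocks i) (hsubpairs i) p hp
    rw [← hrs i] at this
    exact Nat.eq_of_mul_eq_mul_right (by omega) this
  have hVsodd : ∀ i, (Vs i).Nonempty → Odd (Vs i).card := by
    intro i hne
    have h1 : 1 ≤ (Vs i).card := Finset.card_pos.mpr hne
    have h2 := hrs i
    have h3 : Even (rs i * (μ - 1)) := (hrseven i).mul_right _
    rw [h2] at h3
    rw [Nat.odd_iff]
    rw [Nat.even_sub h1] at h3
    rw [Nat.even_iff, Nat.even_iff] at h3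
    omega
  -- the explicit matrix
  set N : Matrix V V (ZMod 2) := fun p q =>
    if p ≠ q ∧ ∃ i, p ∈ Vs i ∧ q ∈ Vs i then 0 else 1 with hN
  have hMN : H' * H'.transpose = N := by
    ext p q
    rw [Matrix.mul_apply]
    simp only [Matrix.transpose_apply, hH']
    have e1 : ∀ B : {B // B ∈ 𝓑 \ Finset.univ.biUnion Bs},
        (if p ∈ B.1 then (1:ZMod 2) else 0) * (if q ∈ B.1 then 1 else 0)
        = if p ∈ B.1 ∧ q ∈ B.1 then 1 else 0 := by
      intro B; by_cases h1 : p ∈ B.1 <;> by_cases h2 : q ∈ B.1 <;> simp [h1, h2]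
    rw [Finset.sum_congr rfl (fun B _ => e1 B)]
    rw [Finset.sum_coe_sort (𝓑 \ Finset.univ.biUnion Bs)
      (fun B => if p ∈ B ∧ q ∈ B then (1:ZMod 2) else 0)]
    rw [Finset.sum_boole]
    by_cases hpq : p = q
    · subst hpq
      have hN1 : N p p = (1:ZMod 2) := by simp [hN]
      rw [hN1]
      simp only [and_self]
      have hsub2 : (Finset.univ.biUnion Bs).filter (fun B => p ∈ B)
          ⊆ 𝓑.filter (fun B => p ∈ B) := by
        intro B hB
        rw [Finset.mem_filter] at hB ⊢
        rw [Finset.mem_biUnion] at hB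
        obtain ⟨⟨i, -, hBi⟩, hpB⟩ := hB
        exact ⟨hBsub i hBi, hpB⟩
      have hsdiff : (𝓑 \ Finset.univ.biUnion Bs).filter (fun B => p ∈ B)
          = 𝓑.filter (fun B => p ∈ B) \ (Finset.univ.biUnion Bs).filter (fun B => p ∈ B) := by
        ext B
        simp only [Finset.mem_filter, Finset.mem_sdiff]
        tauto
      rw [hsdiff, Finset.card_sdiff_of_subset hsub2]
      by_cases hpU : ∃ i, p ∈ Vs i
      · obtain ⟨i, hpi⟩ := hpU
        have hRe : (Finset.univ.biUnion Bs).filter (fun B => p ∈ B)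
            = (Bs i).filter (fun B => p ∈ B) := by
          ext B
          simp only [Finset.mem_filter, Finset.mem_biUnion, Finset.mem_univ, true_and]
          constructor
          · rintro ⟨⟨i', hBi'⟩, hpB⟩
            have hii : i' = i := hUuniq p i' i (hsubblocks i' B hBi' hpB) hpi
            exact ⟨hii ▸ hBi', hpB⟩
          · rintro ⟨hBi, hpB⟩
            exact ⟨⟨i, hBi⟩, hpB⟩
        have hle : rs i ≤ r := by
          rw [← hrV p, ← hrVs i p hpi]
          exact Finset.card_le_card (fun B hB => by
            rw [Finset.mem_filter] at hB ⊢
            exact ⟨hBsub i hB.1, hB.2⟩)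
        rw [hRe, hrV p, hrVs i p hpi]
        exact oddCast _ (Nat.Odd.sub_even hle hrodd (hrseven i))
      · have hRe : (Finset.univ.biUnion Bs).filter (fun B => p ∈ B) = ∅ := by
          rw [Finset.eq_empty_iff_forall_notMem]
          intro B hB
          simp only [Finset.mem_filter, Finset.mem_biUnion] at hB
          obtain ⟨⟨i, -, hBi⟩, hpB⟩ := hB
          exact hpU ⟨i, hsubblocks i B hBi hpB⟩
        rw [hRe, hrV p, Finset.card_empty, Nat.sub_zero]
        exact oddCast _ hrodd
    · obtain ⟨B₀, ⟨hB₀, hpB₀, hqB₀⟩, huniq⟩ := hpairs p q hpq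
      by_cases hex : ∃ i, p ∈ Vs i ∧ q ∈ Vs i
      · have hN0 : N p q = (0:ZMod 2) := by simp [hN, hpq, hex]
        rw [hN0]
        obtain ⟨i, hpi, hqi⟩ := hex
        obtain ⟨B₁, ⟨hB₁, hpB₁, hqB₁⟩, -⟩ := hsubpairs i p hpi q hqi hpq
        have hB₁B₀ : B₁ = B₀ := huniq B₁ ⟨hBsub i hB₁, hpB₁, hqB₁⟩
        have hfe : (𝓑 \ Finset.univ.biUnion Bs).filter (fun B => p ∈ B ∧ q ∈ B) = ∅ := by
          rw [Finset.eq_empty_iff_forall_notMem]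
          intro B hB
          simp only [Finset.mem_filter, Finset.mem_sdiff, Finset.mem_biUnion] at hB
          obtain ⟨⟨hBm, hBn⟩, hpB, hqB⟩ := hB
          have : B = B₀ := huniq B ⟨hBm, hpB, hqB⟩
          subst this
          exact hBn ⟨i, Finset.mem_univ i, hB₁B₀ ▸ hB₁⟩
        rw [hfe]
        simp
      · have hN1 : N p q = (1:ZMod 2) := by simp [hN, hex]
        rw [hN1]
        have hfe : (𝓑 \ Finset.univ.biUnion Bs).filter (fun B => p ∈ B ∧ q ∈ B) = {B₀} := by
          ext B
          simp only [Finset.mem_filter, Finset.mem_sdiff, Finset.mem_biUnion,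
            Finset.mem_singleton]
          constructor
          · rintro ⟨⟨hBm, -⟩, hpB, hqB⟩
            exact huniq B ⟨hBm, hpB, hqB⟩
          · rintro rfl
            refine ⟨⟨hB₀, ?_⟩, hpB₀, hqB₀⟩
            rintro ⟨i, -, hBi⟩
            exact hex ⟨i, hsubblocks i _ hBi hpB₀, hsubblocks i _ hBi hqB₀⟩
        rw [hfe]
        simp
  suffices hfin : N.rank = (∑ i : Fin j, ((Vs i).card - 1)) + 1 by
    convert hfin using 2
    convert hMN using 2
    congr!
  have htwo : (2 : ZMod 2) = 0 := by decide
  set U : Finset V := Finset.univ.biUnion Vs with hUdef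
  have hmemU : ∀ p : V, p ∈ U ↔ ∃ i, p ∈ Vs i := by
    intro p
    simp [hUdef, Finset.mem_biUnion]
  -- mulVec formulas
  have hmv : ∀ (x : V → ZMod 2) (p : V), N.mulVec x p
      = (∑ q, x q) + ∑ q ∈ Finset.univ.filter
          (fun q => p ≠ q ∧ ∃ i, p ∈ Vs i ∧ q ∈ Vs i), x q := by
    intro x p
    have : N.mulVec x p = ∑ q, N p q * x q := by
      simp [Matrix.mulVec, dotProduct]
    rw [this, Finset.sum_filter, ← Finset.sum_add_distrib]
    refine Finset.sum_congr rfl (fun q _ => ?_)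
    by_cases h : p ≠ q ∧ ∃ i, p ∈ Vs i ∧ q ∈ Vs i
    · rw [hN]
      simp only []
      rw [if_pos h, if_pos h]
      have : ∀ a : ZMod 2, 0 * a = a + a := by decide
      exact this (x q)
    · rw [hN]
      simp only []
      rw [if_neg h, if_neg h, one_mul, add_zero]
  have hmvA : ∀ (x : V → ZMod 2) (p : V) (i : Fin j), p ∈ Vs i →
      N.mulVec x p = (∑ q, x q) + ∑ q ∈ (Vs i).erase p, x q := by
    intro x p i hp
    rw [hmv]
    congr 1
    refine Finset.sum_congr ?_ (fun q _ => rfl)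
    ext q
    simp only [Finset.mem_filter, Finset.mem_univ, true_and, Finset.mem_erase]
    constructor
    · rintro ⟨hpq, i', hpi', hqi'⟩
      exact ⟨Ne.symm hpq, hUuniq p i' i hpi' hp ▸ hqi'⟩
    · rintro ⟨hqp, hqi⟩
      exact ⟨Ne.symm hqp, i, hp, hqi⟩
  have hmvB : ∀ (x : V → ZMod 2) (p : V), p ∉ U →
      N.mulVec x p = ∑ q, x q := by
    intro x p hp
    rw [hmv]
    have he : Finset.univ.filter (fun q => p ≠ q ∧ ∃ i, p ∈ Vs i ∧ q ∈ Vs i) = ∅ := by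
      rw [Finset.eq_empty_iff_forall_notMem]
      rintro q hq
      rw [Finset.mem_filter] at hq
      obtain ⟨-, -, i, hpi, -⟩ := hq
      exact hp ((hmemU p).mpr ⟨i, hpi⟩)
    rw [he, Finset.sum_empty, add_zero]
  -- kernel characterization
  have hconst : ∀ x : V → ZMod 2, N.mulVec x = 0 →
      ∀ i, ∀ p ∈ Vs i, ∀ q ∈ Vs i, x p = x q := by
    intro x hx i p hp q hq
    have h1 : (∑ a, x a) + ∑ a ∈ (Vs i).erase p, x a = 0 := by
      rw [← hmvA x p i hp, hx]; rfl
    have h2 : (∑ a, x a) + ∑ a ∈ (Vs i).erase q, x a = 0 := by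
      rw [← hmvA x q i hq, hx]; rfl
    have e1 : (∑ a ∈ (Vs i).erase p, x a) + x p = ∑ a ∈ Vs i, x a :=
      Finset.sum_erase_add _ _ hp
    have e2 : (∑ a ∈ (Vs i).erase q, x a) + x q = ∑ a ∈ Vs i, x a :=
      Finset.sum_erase_add _ _ hq
    linear_combination e1 - e2 - h1 + h2
  have hcardcast : ∀ i : Fin j, (Vs i).Nonempty → (((Vs i).card : ℕ) : ZMod 2) = 1 :=
    fun i hi => oddCast _ (hVsodd i hi)
  have hsum0 : ∀ x : V → ZMod 2, N.mulVec x = 0 → ∑ q, x q = 0 := by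
    intro x hx
    obtain ⟨p₀⟩ := hVne
    by_cases hp₀ : p₀ ∈ U
    · obtain ⟨i, hpi⟩ := (hmemU p₀).mp hp₀
      have hne : (Vs i).Nonempty := ⟨p₀, hpi⟩
      have hterm : ∀ p ∈ Vs i,
          (∑ a, x a) + ((∑ a ∈ Vs i, x a) + x p) = 0 := by
        intro p hp
        have h1 : (∑ a, x a) + ∑ a ∈ (Vs i).erase p, x a = 0 := by
          rw [← hmvA x p i hp, hx]; rfl
        have e1 : (∑ a ∈ (Vs i).erase p, x a) + x p = ∑ a ∈ Vs i, x a :=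
          Finset.sum_erase_add _ _ hp
        linear_combination h1 + e1 + (∑ a ∈ Vs i, x a - ∑ a ∈ (Vs i).erase p, x a) * htwo
      have hsum : ∑ p ∈ Vs i, ((∑ a, x a) + ((∑ a ∈ Vs i, x a) + x p)) = 0 := by
        rw [Finset.sum_congr rfl hterm, Finset.sum_const, smul_zero]
      rw [Finset.sum_add_distrib, Finset.sum_add_distrib, Finset.sum_const,
        Finset.sum_const] at hsum
      rw [nsmul_eq_mul, nsmul_eq_mul, hcardcast i hne, one_mul, one_mul] at hsum
      linear_combination hsum - (∑ a ∈ Vs i, x a) * htwo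
    · rw [← hmvB x p₀ hp₀, hx]; rfl
  have hback : ∀ x : V → ZMod 2,
      (∀ i, ∀ p ∈ Vs i, ∀ q ∈ Vs i, x p = x q) → (∑ q, x q = 0) →
      N.mulVec x = 0 := by
    intro x hc hs
    funext p
    rw [Pi.zero_apply]
    by_cases hp : p ∈ U
    · obtain ⟨i, hpi⟩ := (hmemU p).mp hp
      rw [hmvA x p i hpi, hs, zero_add]
      have e1 : (∑ a ∈ (Vs i).erase p, x a) + x p = ∑ a ∈ Vs i, x a :=
        Finset.sum_erase_add _ _ hpi
      have e2 : ∑ a ∈ Vs i, x a = ((Vs i).card : ℕ) • x p := by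
        rw [← Finset.sum_const]
        exact Finset.sum_congr rfl (fun a ha => hc i a ha p hpi)
      rw [nsmul_eq_mul, hcardcast i ⟨p, hpi⟩, one_mul] at e2
      linear_combination e1 + e2
    · rw [hmvB x p hp, hs]
  -- the index type for the quotient
  have hQtne : Nonempty ({p : V // p ∉ U} ⊕ {i : Fin j // (Vs i).Nonempty}) := by
    obtain ⟨p₀⟩ := hVne
    by_cases hp : p₀ ∈ U
    · obtain ⟨i, hpi⟩ := (hmemU p₀).mp hp
      exact ⟨Sum.inr ⟨i, ⟨p₀, hpi⟩⟩⟩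
    · exact ⟨Sum.inl ⟨p₀, hp⟩⟩
  set g : V → ({p : V // p ∉ U} ⊕ {i : Fin j // (Vs i).Nonempty}) := fun p =>
    if h : p ∈ U then Sum.inr ⟨((hmemU p).mp h).choose, ⟨p, ((hmemU p).mp h).choose_spec⟩⟩
    else Sum.inl ⟨p, h⟩ with hgdef
  have hg1 : ∀ (p : V) (i : Fin j) (hpi : p ∈ Vs i),
      g p = Sum.inr ⟨i, ⟨p, hpi⟩⟩ := by
    intro p i hpi
    have hpU : p ∈ U := (hmemU p).mpr ⟨i, hpi⟩
    rw [hgdef]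
    simp only [dif_pos hpU]
    congr 1
    exact Subtype.ext (hUuniq p _ i ((hmemU p).mp hpU).choose_spec hpi)
  have hg2 : ∀ (p : V) (h : p ∉ U), g p = Sum.inl ⟨p, h⟩ := by
    intro p h
    rw [hgdef]
    simp only [dif_neg h]
  have hgsurj : Function.Surjective g := by
    rintro (⟨p₀, hp₀⟩ | ⟨i, hne⟩)
    · exact ⟨p₀, hg2 p₀ hp₀⟩
    · obtain ⟨p, hp⟩ := hne
      exact ⟨p, hg1 p i hp⟩
  have hfibcard : ∀ t, Odd (Finset.univ.filter (fun p => g p = t)).card := by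
    rintro (⟨p₀, hp₀⟩ | ⟨i, hne⟩)
    · have he : Finset.univ.filter (fun p => g p = Sum.inl ⟨p₀, hp₀⟩) = {p₀} := by
        ext p
        simp only [Finset.mem_filter, Finset.mem_univ, true_and, Finset.mem_singleton]
        constructor
        · intro h
          by_cases hpU : p ∈ U
          · obtain ⟨i, hpi⟩ := (hmemU p).mp hpU
            rw [hg1 p i hpi] at h
            exact absurd h (by simp)
          · rw [hg2 p hpU] at h
            simpa using h
        · rintro rfl
          exact hg2 _ hp₀
      rw [he, Finset.card_singleton]
      exact odd_one
    · have he : Finset.univ.filter (fun p => g p = Sum.inr ⟨i, hne⟩) = Vs i := by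
        ext p
        simp only [Finset.mem_filter, Finset.mem_univ, true_and]
        constructor
        · intro h
          by_cases hpU : p ∈ U
          · obtain ⟨i', hpi'⟩ := (hmemU p).mp hpU
            rw [hg1 p i' hpi'] at h
            simp only [Sum.inr.injEq, Subtype.mk.injEq] at h
            have hii : i' = i := congrArg Subtype.val h
            exact hii ▸ hpi'
          · rw [hg2 p hpU] at h
            exact absurd h (by simp)
        · intro hp
          rw [hg1 p i hp]
      rw [he]
      exact hVsodd i hne
  have hfib : ∀ y : ({p : V // p ∉ U} ⊕ {i : Fin j // (Vs i).Nonempty}) → ZMod 2,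
      ∑ p, y (g p) = ∑ t, y t := by
    intro y
    rw [Finset.sum_comp]
    have himg : Finset.univ.image g = Finset.univ := by
      ext t
      simp only [Finset.mem_image, Finset.mem_univ, true_and, iff_true]
      exact hgsurj t
    rw [himg]
    refine Finset.sum_congr rfl (fun t _ => ?_)
    rw [nsmul_eq_mul, oddCast _ (hfibcard t), one_mul]
  set ψ := LinearMap.funLeft (ZMod 2) (ZMod 2) g with hψdef
  have hinj : Function.Injective ψ :=
    LinearMap.funLeft_injective_of_surjective _ _ _ hgsurj
  set ℓ : (({p : V // p ∉ U} ⊕ {i : Fin j // (Vs i).Nonempty}) → ZMod 2) →ₗ[ZMod 2] ZMod 2 :=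
    { toFun := fun y => ∑ t, y t
      map_add' := fun a b => by simp [Finset.sum_add_distrib]
      map_smul' := fun c a => by
        simp only [Pi.smul_apply, smul_eq_mul, RingHom.id_apply, ← Finset.mul_sum] } with hℓdef
  have hℓapp : ∀ y, ℓ y = ∑ t, y t := fun y => rfl
  have hkereq : LinearMap.ker (Matrix.mulVecLin N)
      = (LinearMap.ker ℓ).map ψ := by
    ext x
    simp only [LinearMap.mem_ker, Submodule.mem_map, Matrix.mulVecLin_apply]
    constructor
    · intro hx
      refine ⟨Sum.elim (fun p => x p.1) (fun b => x (Exists.choose b.2)), ?_, ?_⟩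
      · rw [hℓapp, ← hfib]
        rw [← hsum0 x hx]
        refine Finset.sum_congr rfl (fun p _ => ?_)
        by_cases hp : p ∈ U
        · obtain ⟨i, hpi⟩ := (hmemU p).mp hp
          rw [hg1 p i hpi]
          exact hconst x hx i _ (Exists.choose_spec (⟨p, hpi⟩ : (Vs i).Nonempty)) p hpi
        · rw [hg2 p hp]
          rfl
      · funext p
        rw [hψdef, LinearMap.funLeft_apply]
        by_cases hp : p ∈ U
        · obtain ⟨i, hpi⟩ := (hmemU p).mp hp
          rw [hg1 p i hpi]
          exact hconst x hx i _ (Exists.choose_spec (⟨p, hpi⟩ : (Vs i).Nonempty)) p hpi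
        · rw [hg2 p hp]
          rfl
    · rintro ⟨y, hy, rfl⟩
      refine hback _ ?_ ?_
      · intro i p hp q hq
        simp only [hψdef, LinearMap.funLeft_apply]
        rw [hg1 p i hp, hg1 q i hq]
      · have hco : ∀ p, ψ y p = y (g p) := fun p => rfl
        rw [Finset.sum_congr rfl (fun p _ => hco p), hfib]
        have hy' : ℓ y = 0 := hy
        rw [hℓapp] at hy'
        exact hy'
  have hkdim : Module.finrank (ZMod 2) (LinearMap.ker (Matrix.mulVecLin N))
      = Module.finrank (ZMod 2) (LinearMap.ker ℓ) := by
    rw [hkereq]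
    exact ((Submodule.equivMapOfInjective _ hinj _).symm).finrank_eq
  have hlsurj : LinearMap.range ℓ = ⊤ := by
    rw [LinearMap.range_eq_top]
    intro c
    obtain ⟨t₀⟩ := hQtne
    refine ⟨Pi.single t₀ c, ?_⟩
    rw [hℓapp]
    simp
  have hZdim : Module.finrank (ZMod 2) (LinearMap.ker ℓ) + 1
      = Fintype.card ({p : V // p ∉ U} ⊕ {i : Fin j // (Vs i).Nonempty}) := by
    have h := LinearMap.finrank_range_add_finrank_ker ℓ
    rw [hlsurj, finrank_top, Module.finrank_self, Module.finrank_pi] at h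
    omega
  have hrn := LinearMap.finrank_range_add_finrank_ker (Matrix.mulVecLin N)
  rw [Module.finrank_pi, hv] at hrn
  have hrankdef : N.rank = Module.finrank (ZMod 2) (LinearMap.range (Matrix.mulVecLin N)) := rfl
  -- cardinality arithmetic
  have hcardQ : Fintype.card ({p : V // p ∉ U} ⊕ {i : Fin j // (Vs i).Nonempty})
      = Fintype.card {p : V // p ∉ U} + Fintype.card {i : Fin j // (Vs i).Nonempty} :=
    Fintype.card_sum
  have hout : U.card + Fintype.card {p : V // p ∉ U} = v := by
    have h1 : Fintype.card {p : V // p ∈ U} = U.card := Fintype.card_coe U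
    have h2 : Fintype.card {p : V // p ∉ U} = (Uᶜ : Finset V).card := by
      rw [← Fintype.card_coe]
      exact Fintype.card_congr (Equiv.subtypeEquivRight (fun p => (Finset.mem_compl).symm))
    have h3 : (Uᶜ : Finset V).card = Fintype.card V - U.card := Finset.card_compl U
    have h4 : U.card ≤ Fintype.card V := Finset.card_le_univ U
    omega
  have hUcard : U.card = ∑ i, (Vs i).card := by
    rw [hUdef]
    exact Finset.card_biUnion (fun i _ i' _ h => hdisj i i' h)
  have hNEcard : Fintype.card {i : Fin j // (Vs i).Nonempty}
      = (Finset.univ.filter (fun i => (Vs i).Nonempty)).card := Fintype.card_subtype _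
  have hsplit : ∑ i, (Vs i).card
      = (∑ i, ((Vs i).card - 1)) + (Finset.univ.filter (fun i => (Vs i).Nonempty)).card := by
    rw [Finset.card_filter, ← Finset.sum_add_distrib]
    refine Finset.sum_congr rfl (fun i _ => ?_)
    by_cases h : (Vs i).Nonempty
    · have := Finset.card_pos.mpr h
      simp only [h, if_true]
      omega
    · rw [Finset.not_nonempty_iff_eq_empty] at h
      simp [h]
  rw [hrankdef]
  omega
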